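/- Let n ∈ ℕ with n ≥ 1 and let t ∈ ℝ with 0 < t < 1 (take σ = √t), and define K(w,z) = (1/n)·Σ_{m=0}^{n−1} p_m(w)·p_m(z) and the pre-kernel H(w,z) = exp(n·(−w·z + t·w²/2 + t·z²/2))·K(w,z). Then for all w, z ∈ ℂ: deriv_w H(w,z) = (t·p_n(w)·p_{n−1}(z) − p_{n−1}(w)·p_n(z))·exp(n·(−w·z + t·w²/2 + t·z²/2))/√(1−t²), and deriv_z H(w,z) = (−p_n(w)·p_{n−1}(z) + t·p_{n−1}(w)·p_n(z))·exp(n·(−w·z + t·w²/2 + t·z²/2))/√(1−t²), where deriv_w and deriv_z denote the complex derivatives of H in the first and second variables respectively. -/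

import Mathlib

/-- The probabilists' Hermite polynomial evaluated at a complex argument. -/
noncomputable def hermiteC (m : ℕ) (z : ℂ) : ℂ :=
  Polynomial.aeval z (Polynomial.hermite m)

/-- The orthonormal polynomials for the Gaussian potential with real `t ∈ (0,1)`
and `σ = √t`. -/
noncomputable def opolyR (n : ℕ) (t : ℝ) (m : ℕ) (z : ℂ) : ℂ :=
  hermiteC m (z * (Real.sqrt ((n : ℝ) * (1 - t ^ 2)) : ℂ) / (Real.sqrt t : ℂ)) *
    (Real.sqrt t : ℂ) ^ m *
    (Real.sqrt (((n : ℝ) / Real.pi) * Real.sqrt (1 - t ^ 2)) : ℂ) /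
    (Real.sqrt (Nat.factorial m) : ℂ)

/-- `K(w,z) = (1/n)·Σ_{m=0}^{n−1} p_m(w)·p_m(z)`. -/
noncomputable def kerK (n : ℕ) (t : ℝ) (w z : ℂ) : ℂ :=
  (1 / (n : ℂ)) * ∑ m ∈ Finset.range n, opolyR n t m w * opolyR n t m z

/-- The pre-kernel `H(w,z) = exp(n·(−w·z + t·w²/2 + t·z²/2))·K(w,z)`. -/
noncomputable def preH (n : ℕ) (t : ℝ) (w z : ℂ) : ℂ :=
  Complex.exp ((n : ℂ) * (-(w * z) + (t : ℂ) * w ^ 2 / 2 + (t : ℂ) * z ^ 2 / 2)) *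
    kerK n t w z

open Polynomial in
lemma deriv_hermite : ∀ m : ℕ, Polynomial.derivative (Polynomial.hermite (m+1))
    = ((m : Polynomial ℤ) + 1) * Polynomial.hermite m
  | 0 => by simp [Polynomial.hermite_one, Polynomial.hermite_zero]
  | (m+1) => by
    rw [Polynomial.hermite_succ (m+1), Polynomial.derivative_sub, Polynomial.derivative_mul,
      Polynomial.derivative_X]
    simp only [deriv_hermite m]
    rw [Polynomial.derivative_mul, Polynomial.hermite_succ m]
    push_cast
    ring_nf
    simp [Polynomial.derivative_natCast]

lemma opolyR_hasDerivAt (n : ℕ) (t : ℝ) (ht0 : 0 < t) (m : ℕ) (z : ℂ) :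
    HasDerivAt (opolyR n t m)
      ((Real.sqrt ((n : ℝ) * (1 - t ^ 2)) : ℂ) * (Real.sqrt (m : ℝ) : ℂ)
        * opolyR n t (m-1) z) z := by
  set c : ℂ := (Real.sqrt ((n : ℝ) * (1 - t ^ 2)) : ℂ) with hc
  set s : ℂ := (Real.sqrt t : ℂ) with hs
  set A : ℂ := (Real.sqrt (((n : ℝ) / Real.pi) * Real.sqrt (1 - t ^ 2)) : ℂ) with hA
  have hs0 : s ≠ 0 := by
    simp only [hs, ne_eq, Complex.ofReal_eq_zero]
    positivity
  have hinner : HasDerivAt (fun z' : ℂ => z' * c / s) (c / s) z := by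
    simpa [mul_div_assoc] using (hasDerivAt_id z).mul_const (c / s)
  have haev : HasDerivAt (fun z' : ℂ =>
      Polynomial.aeval (z' * c / s) (Polynomial.hermite m))
      (Polynomial.aeval (z * c / s) (Polynomial.derivative (Polynomial.hermite m)) * (c / s)) z :=
    HasDerivAt.comp (h₂ := fun x : ℂ => Polynomial.aeval x (Polynomial.hermite m)) z (Polynomial.hasDerivAt_aeval (q := Polynomial.hermite m) (z * c / s)) hinner
  have h2 := ((haev.mul_const (s ^ m)).mul_const A).div_const
      ((Real.sqrt (Nat.factorial m) : ℂ))
  have key : Polynomial.aeval (z * c / s) (Polynomial.derivative (Polynomial.hermite m)) * (c / s)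
        * s ^ m * A / (Real.sqrt (Nat.factorial m) : ℂ)
      = c * (Real.sqrt (m : ℝ) : ℂ) * opolyR n t (m-1) z := by
    match m with
    | 0 => simp [Polynomial.hermite_zero]
    | (k+1) =>
      rw [deriv_hermite k]
      simp only [map_mul, map_add, map_natCast, map_one]
      unfold opolyR hermiteC
      rw [← hc, ← hs, ← hA]
      have hFk : (0:ℝ) < Real.sqrt (Nat.factorial k) := Real.sqrt_pos.2 (by positivity)
      have hFk0 : ((Real.sqrt (Nat.factorial k) : ℝ) : ℂ) ≠ 0 := by
        exact_mod_cast hFk.ne'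
      have hRk : ((Real.sqrt ((k:ℝ)+1) : ℝ) : ℂ) * ((Real.sqrt ((k:ℝ)+1) : ℝ) : ℂ)
          = (k : ℂ) + 1 := by
        rw [← Complex.ofReal_mul, Real.mul_self_sqrt (by positivity)]
        push_cast; ring
      have hRk0 : ((Real.sqrt ((k:ℝ)+1) : ℝ) : ℂ) ≠ 0 := by
        have : (0:ℝ) < Real.sqrt ((k:ℝ)+1) := Real.sqrt_pos.2 (by positivity)
        exact_mod_cast this.ne'
      have hFs : ((Real.sqrt (Nat.factorial (k+1)) : ℝ) : ℂ)
          = ((Real.sqrt ((k:ℝ)+1) : ℝ) : ℂ) * ((Real.sqrt (Nat.factorial k) : ℝ) : ℂ) := by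
        rw [← Complex.ofReal_mul, ← Real.sqrt_mul (by positivity)]
        rw [Nat.factorial_succ]
        push_cast
        ring_nf
      have hRcast : ((Real.sqrt ((k+1 : ℕ) : ℝ) : ℝ) : ℂ) = ((Real.sqrt ((k:ℝ)+1) : ℝ) : ℂ) := by
        norm_num
      rw [hFs, Nat.add_sub_cancel, hRcast]
      field_simp
      linear_combination (-(Polynomial.aeval (z * c / s) (Polynomial.hermite k) * c
        * s ^ (k+1) * A)) * hRk
  rw [key] at h2
  exact h2

lemma opolyR_rec (n : ℕ) (t : ℝ) (ht0 : 0 < t) (m : ℕ) (z : ℂ) :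
    (Real.sqrt ((n : ℝ) * (1 - t ^ 2)) : ℂ) * z * opolyR n t m z
      = (Real.sqrt ((m : ℝ) + 1) : ℂ) * opolyR n t (m+1) z
        + (t : ℂ) * (Real.sqrt (m : ℝ) : ℂ) * opolyR n t (m-1) z := by
  set c : ℂ := (Real.sqrt ((n : ℝ) * (1 - t ^ 2)) : ℂ) with hc
  set s : ℂ := (Real.sqrt t : ℂ) with hs
  set A : ℂ := (Real.sqrt (((n : ℝ) / Real.pi) * Real.sqrt (1 - t ^ 2)) : ℂ) with hA
  have hs0 : s ≠ 0 := by
    simp only [hs, ne_eq, Complex.ofReal_eq_zero]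
    positivity
  have hs2 : s * s = (t : ℂ) := by
    rw [hs, ← Complex.ofReal_mul, Real.mul_self_sqrt ht0.le]
  match m with
  | 0 =>
    unfold opolyR hermiteC
    rw [← hc, ← hs, ← hA]
    simp only [Polynomial.hermite_zero, Polynomial.hermite_one, map_one, Polynomial.aeval_X,
      Nat.factorial, Nat.cast_one, Real.sqrt_one, Nat.cast_zero, Real.sqrt_zero,
      Complex.ofReal_one, Complex.ofReal_zero, pow_zero, pow_one, zero_add]
    field_simp
    norm_num
    ring
  | (k+1) =>
    unfold opolyR hermiteC
    rw [← hc, ← hs, ← hA]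
    rw [Polynomial.hermite_succ (k+1), Nat.add_sub_cancel]
    simp only [map_sub, map_mul, Polynomial.aeval_X, deriv_hermite k, map_add, map_natCast,
      map_one]
    have hFk : (0:ℝ) < Real.sqrt (Nat.factorial k) := Real.sqrt_pos.2 (by positivity)
    have hFk0 : ((Real.sqrt (Nat.factorial k) : ℝ) : ℂ) ≠ 0 := by exact_mod_cast hFk.ne'
    have hRk : ((Real.sqrt ((k:ℝ)+1) : ℝ) : ℂ) * ((Real.sqrt ((k:ℝ)+1) : ℝ) : ℂ)
        = (k : ℂ) + 1 := by
      rw [← Complex.ofReal_mul, Real.mul_self_sqrt (by positivity)]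
      push_cast; ring
    have hRk0 : ((Real.sqrt ((k:ℝ)+1) : ℝ) : ℂ) ≠ 0 := by
      have : (0:ℝ) < Real.sqrt ((k:ℝ)+1) := Real.sqrt_pos.2 (by positivity)
      exact_mod_cast this.ne'
    have hRk20 : ((Real.sqrt ((k:ℝ)+2) : ℝ) : ℂ) ≠ 0 := by
      have : (0:ℝ) < Real.sqrt ((k:ℝ)+2) := Real.sqrt_pos.2 (by positivity)
      exact_mod_cast this.ne'
    have hFs1 : ((Real.sqrt (Nat.factorial (k+1)) : ℝ) : ℂ)
        = ((Real.sqrt ((k:ℝ)+1) : ℝ) : ℂ) * ((Real.sqrt (Nat.factorial k) : ℝ) : ℂ) := by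
      rw [← Complex.ofReal_mul, ← Real.sqrt_mul (by positivity)]
      rw [Nat.factorial_succ]; push_cast; ring_nf
    have hFs2 : ((Real.sqrt (Nat.factorial (k+2)) : ℝ) : ℂ)
        = ((Real.sqrt ((k:ℝ)+2) : ℝ) : ℂ) * ((Real.sqrt (Nat.factorial (k+1)) : ℝ) : ℂ) := by
      rw [← Complex.ofReal_mul, ← Real.sqrt_mul (by positivity)]
      rw [Nat.factorial_succ (k+1)]; push_cast; ring_nf
    have hRk2 : ((Real.sqrt ((k:ℝ)+2) : ℝ) : ℂ) * ((Real.sqrt ((k:ℝ)+2) : ℝ) : ℂ)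
        = (k : ℂ) + 2 := by
      rw [← Complex.ofReal_mul, Real.mul_self_sqrt (by positivity)]
      push_cast; ring
    have hcast1 : ((Real.sqrt (((k+1 : ℕ) : ℝ)) : ℝ) : ℂ) = ((Real.sqrt ((k:ℝ)+1) : ℝ) : ℂ) := by
      norm_num
    have hcast2 : ((Real.sqrt (((k+1 : ℕ) : ℝ) + 1) : ℝ) : ℂ)
        = ((Real.sqrt ((k:ℝ)+2) : ℝ) : ℂ) := by
      norm_num; ring_nf
    rw [hFs2, hFs1, hcast1, hcast2]
    set Hk := Polynomial.aeval (z * c / s) (Polynomial.hermite k)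
    set Hk1 := Polynomial.aeval (z * c / s) (Polynomial.hermite (k+1))
    field_simp
    linear_combination (((k:ℂ)+1) * Hk * A * s^(k+1)) * hs2
      - (Hk * (t:ℂ) * A * s^(k+1)) * hRk

lemma key_sum (n : ℕ) (hn : 1 ≤ n) (t : ℝ) (ht0 : 0 < t) (ht1 : t < 1) (u v : ℂ) :
    (n : ℂ) * ((t : ℂ) * u - v)
        * ((1 / (n : ℂ)) * ∑ m ∈ Finset.range n, opolyR n t m u * opolyR n t m v)
      + (1 / (n : ℂ)) * ∑ m ∈ Finset.range n,
          ((Real.sqrt ((n : ℝ) * (1 - t ^ 2)) : ℂ) * (Real.sqrt (m : ℝ) : ℂ)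
            * opolyR n t (m-1) u) * opolyR n t m v
    = ((t : ℂ) * opolyR n t n u * opolyR n t (n - 1) v
        - opolyR n t (n - 1) u * opolyR n t n v) / (Real.sqrt (1 - t ^ 2) : ℂ) := by
  set c : ℂ := (Real.sqrt ((n : ℝ) * (1 - t ^ 2)) : ℂ) with hc
  have hq : (0:ℝ) < 1 - t ^ 2 := by nlinarith
  have hn0 : (n : ℂ) ≠ 0 := Nat.cast_ne_zero.2 (by omega)
  have hcR : (0:ℝ) < Real.sqrt ((n : ℝ) * (1 - t ^ 2)) := Real.sqrt_pos.2 (by positivity)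
  have hc0 : c ≠ 0 := by rw [hc]; exact_mod_cast hcR.ne'
  have hc2 : c * c = (n : ℂ) * (1 - (t:ℂ) ^ 2) := by
    rw [hc, ← Complex.ofReal_mul, Real.mul_self_sqrt (by positivity)]
    push_cast; ring
  have hq0 : ((Real.sqrt (1 - t ^ 2) : ℝ) : ℂ) ≠ 0 := by
    have : (0:ℝ) < Real.sqrt (1 - t ^ 2) := Real.sqrt_pos.2 hq
    exact_mod_cast this.ne'
  have hsn0 : ((Real.sqrt ((n:ℕ) : ℝ) : ℝ) : ℂ) ≠ 0 := by
    have : (0:ℝ) < Real.sqrt ((n:ℕ) : ℝ) := Real.sqrt_pos.2 (by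
      exact_mod_cast Nat.cast_pos.2 hn)
    exact_mod_cast this.ne'
  have hcsplit : c = ((Real.sqrt ((n:ℕ) : ℝ) : ℝ) : ℂ) * ((Real.sqrt (1 - t ^ 2) : ℝ) : ℂ) := by
    rw [hc, ← Complex.ofReal_mul, ← Real.sqrt_mul (by positivity)]
  set a : ℕ → ℂ := fun m => (Real.sqrt (m : ℝ) : ℂ)
      * ((t : ℂ) * opolyR n t m u * opolyR n t (m-1) v
          - opolyR n t (m-1) u * opolyR n t m v) with ha
  have hterm : ∀ m : ℕ,
      c * ((n : ℂ) * ((t : ℂ) * u - v) * (opolyR n t m u * opolyR n t m v)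
          + (c * (Real.sqrt (m : ℝ) : ℂ) * opolyR n t (m-1) u) * opolyR n t m v)
        = (n : ℂ) * (a (m+1) - a m) := by
    intro m
    have recu := opolyR_rec n t ht0 m u
    have recv := opolyR_rec n t ht0 m v
    rw [← hc] at recu recv
    have hcast : ((Real.sqrt (((m+1:ℕ)) : ℝ) : ℝ) : ℂ) = ((Real.sqrt ((m:ℝ)+1) : ℝ) : ℂ) := by
      norm_num
    simp only [ha, Nat.add_sub_cancel, hcast]
    linear_combination ((n:ℂ) * (t:ℂ) * opolyR n t m v) * recu
      - ((n:ℂ) * opolyR n t m u) * recv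
      + ((Real.sqrt (m : ℝ) : ℂ) * opolyR n t (m-1) u * opolyR n t m v) * hc2
  have htel : ∑ m ∈ Finset.range n, (a (m+1) - a m) = a n - a 0 := Finset.sum_range_sub a n
  have ha0 : a 0 = 0 := by simp [ha]
  have hsum : c * ((n : ℂ) * ((t : ℂ) * u - v)
        * (∑ m ∈ Finset.range n, opolyR n t m u * opolyR n t m v)
      + ∑ m ∈ Finset.range n,
          (c * (Real.sqrt (m : ℝ) : ℂ) * opolyR n t (m-1) u) * opolyR n t m v)
      = (n : ℂ) * a n := by
    have e1 : (n : ℂ) * ((t : ℂ) * u - v)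
          * (∑ m ∈ Finset.range n, opolyR n t m u * opolyR n t m v)
        + ∑ m ∈ Finset.range n,
            (c * (Real.sqrt (m : ℝ) : ℂ) * opolyR n t (m-1) u) * opolyR n t m v
        = ∑ m ∈ Finset.range n,
            ((n : ℂ) * ((t : ℂ) * u - v) * (opolyR n t m u * opolyR n t m v)
              + (c * (Real.sqrt (m : ℝ) : ℂ) * opolyR n t (m-1) u) * opolyR n t m v) := by
      rw [Finset.sum_add_distrib, Finset.mul_sum]
    rw [e1, Finset.mul_sum]
    rw [Finset.sum_congr rfl (fun m _ => hterm m), ← Finset.mul_sum, htel, ha0, sub_zero]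
  -- now finish
  have han : a n = ((Real.sqrt ((n:ℕ) : ℝ) : ℝ) : ℂ)
      * ((t : ℂ) * opolyR n t n u * opolyR n t (n - 1) v
          - opolyR n t (n - 1) u * opolyR n t n v) := rfl
  rw [han] at hsum
  have h2 : ((Real.sqrt (1 - t ^ 2) : ℝ) : ℂ)
      * ((n : ℂ) * ((t : ℂ) * u - v)
          * (∑ m ∈ Finset.range n, opolyR n t m u * opolyR n t m v)
        + ∑ m ∈ Finset.range n,
            (c * (Real.sqrt (m : ℝ) : ℂ) * opolyR n t (m-1) u) * opolyR n t m v)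
      = (n : ℂ) * ((t : ℂ) * opolyR n t n u * opolyR n t (n - 1) v
          - opolyR n t (n - 1) u * opolyR n t n v) := by
    apply mul_left_cancel₀ hsn0
    linear_combination hsum - ((n : ℂ) * ((t : ℂ) * u - v)
          * (∑ m ∈ Finset.range n, opolyR n t m u * opolyR n t m v)
        + ∑ m ∈ Finset.range n,
            (c * (Real.sqrt (m : ℝ) : ℂ) * opolyR n t (m-1) u) * opolyR n t m v) * hcsplit
  field_simp
  linear_combination h2

/-- the identities for the partial complex derivatives of the pre-kernel `H`. -/
theorem stmt5 (n : ℕ) (hn : 1 ≤ n) (t : ℝ) (ht0 : 0 < t) (ht1 : t < 1) (w z : ℂ) :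
    deriv (fun w' => preH n t w' z) w =
      ((t : ℂ) * opolyR n t n w * opolyR n t (n - 1) z -
          opolyR n t (n - 1) w * opolyR n t n z) *
        Complex.exp ((n : ℂ) * (-(w * z) + (t : ℂ) * w ^ 2 / 2 + (t : ℂ) * z ^ 2 / 2)) /
        (Real.sqrt (1 - t ^ 2) : ℂ) ∧
    deriv (fun z' => preH n t w z') z =
      (-(opolyR n t n w * opolyR n t (n - 1) z) +
          (t : ℂ) * opolyR n t (n - 1) w * opolyR n t n z) *
        Complex.exp ((n : ℂ) * (-(w * z) + (t : ℂ) * w ^ 2 / 2 + (t : ℂ) * z ^ 2 / 2)) /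
        (Real.sqrt (1 - t ^ 2) : ℂ) := by
  constructor
  · -- derivative in w
    have h1 : HasDerivAt (fun w' : ℂ => -(w' * z)) (-z) w := by
      simpa using ((hasDerivAt_id' w).mul_const z).fun_neg
    have h2 : HasDerivAt (fun w' : ℂ => (t : ℂ) * w' ^ 2 / 2) ((t : ℂ) * w) w := by
      have h := ((hasDerivAt_pow 2 w).const_mul (t : ℂ)).div_const 2
      exact h.congr_deriv (by ring)
    have h3 : HasDerivAt (fun _ : ℂ => (t : ℂ) * z ^ 2 / 2) 0 w := hasDerivAt_const _ _
    have hinner : HasDerivAt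
        (fun w' : ℂ => (n : ℂ) * (-(w' * z) + (t : ℂ) * w' ^ 2 / 2 + (t : ℂ) * z ^ 2 / 2))
        ((n : ℂ) * (-z + (t : ℂ) * w)) w := by
      have := ((h1.add h2).add h3).const_mul (n : ℂ)
      exact this.congr_deriv (by ring)
    have hE := hinner.cexp
    have hK : HasDerivAt (fun w' => kerK n t w' z)
        ((1 / (n : ℂ)) * ∑ m ∈ Finset.range n,
          ((Real.sqrt ((n : ℝ) * (1 - t ^ 2)) : ℂ) * (Real.sqrt (m : ℝ) : ℂ)
            * opolyR n t (m-1) w) * opolyR n t m z) w := by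
      unfold kerK
      exact HasDerivAt.const_mul _
        (HasDerivAt.fun_sum fun m _ => (opolyR_hasDerivAt n t ht0 m w).mul_const _)
    have hH := hE.fun_mul hK
    have hfun : (fun w' => preH n t w' z)
        = fun w' => Complex.exp ((n : ℂ) * (-(w' * z) + (t : ℂ) * w' ^ 2 / 2
            + (t : ℂ) * z ^ 2 / 2)) * kerK n t w' z := rfl
    rw [hfun, hH.deriv]
    have hks := key_sum n hn t ht0 ht1 w z
    unfold kerK
    linear_combination (Complex.exp ((n : ℂ) * (-(w * z) + (t : ℂ) * w ^ 2 / 2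
      + (t : ℂ) * z ^ 2 / 2))) * hks
  · -- derivative in z
    have h1 : HasDerivAt (fun z' : ℂ => -(w * z')) (-w) z := by
      simpa using ((hasDerivAt_id' z).const_mul w).fun_neg
    have h2 : HasDerivAt (fun z' : ℂ => (t : ℂ) * z' ^ 2 / 2) ((t : ℂ) * z) z := by
      have h := ((hasDerivAt_pow 2 z).const_mul (t : ℂ)).div_const 2
      exact h.congr_deriv (by ring)
    have h3 : HasDerivAt (fun _ : ℂ => (t : ℂ) * w ^ 2 / 2) 0 z := hasDerivAt_const _ _
    have hinner : HasDerivAt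
        (fun z' : ℂ => (n : ℂ) * (-(w * z') + (t : ℂ) * w ^ 2 / 2 + (t : ℂ) * z' ^ 2 / 2))
        ((n : ℂ) * (-w + (t : ℂ) * z)) z := by
      have := ((h1.add h3).add h2).const_mul (n : ℂ)
      exact this.congr_deriv (by ring)
    have hE := hinner.cexp
    have hK : HasDerivAt (fun z' => kerK n t w z')
        ((1 / (n : ℂ)) * ∑ m ∈ Finset.range n,
          opolyR n t m w * ((Real.sqrt ((n : ℝ) * (1 - t ^ 2)) : ℂ) * (Real.sqrt (m : ℝ) : ℂ)
            * opolyR n t (m-1) z)) z := by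
      unfold kerK
      exact HasDerivAt.const_mul _
        (HasDerivAt.fun_sum fun m _ => (opolyR_hasDerivAt n t ht0 m z).const_mul _)
    have hH := hE.fun_mul hK
    have hfun : (fun z' => preH n t w z')
        = fun z' => Complex.exp ((n : ℂ) * (-(w * z') + (t : ℂ) * w ^ 2 / 2
            + (t : ℂ) * z' ^ 2 / 2)) * kerK n t w z' := rfl
    rw [hfun, hH.deriv]
    have hks := key_sum n hn t ht0 ht1 z w
    have hcomm1 : ∑ m ∈ Finset.range n, opolyR n t m w * opolyR n t m z
        = ∑ m ∈ Finset.range n, opolyR n t m z * opolyR n t m w :=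
      Finset.sum_congr rfl fun m _ => mul_comm _ _
    have hcomm2 : ∑ m ∈ Finset.range n,
          opolyR n t m w * ((Real.sqrt ((n : ℝ) * (1 - t ^ 2)) : ℂ) * (Real.sqrt (m : ℝ) : ℂ)
            * opolyR n t (m-1) z)
        = ∑ m ∈ Finset.range n,
          ((Real.sqrt ((n : ℝ) * (1 - t ^ 2)) : ℂ) * (Real.sqrt (m : ℝ) : ℂ)
            * opolyR n t (m-1) z) * opolyR n t m w :=
      Finset.sum_congr rfl fun m _ => mul_comm _ _
    unfold kerK
    rw [hcomm1, hcomm2]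
    linear_combination (Complex.exp ((n : ℂ) * (-(w * z) + (t : ℂ) * w ^ 2 / 2
      + (t : ℂ) * z ^ 2 / 2))) * hks
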